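/- For every k ≥ 1, the characteristic vectors over the field ZMod 2 (indexed by the coordinates {1,…,2^k−1}) of the 2-element sets in B_k are linearly independent. -/
import Mathlib


/-- `B_1 = ∅` and `B_k = B_{k−1} ∪ {{j, 2^{k−1}+j} : 1 ≤ j ≤ 2^{k−1}−1}` for `k ≥ 2`. -/
def Bk : ℕ → Finset (Finset ℕ)
  | 0 => ∅
  | 1 => ∅
  | (k + 2) =>
      Bk (k + 1) ∪
        (Finset.Icc 1 (2 ^ (k + 1) - 1)).image (fun j => ({j, 2 ^ (k + 1) + j} : Finset ℕ))

/-- The characteristic vector over `ZMod 2` of a subset of `{1,…,N}`,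
indexed by coordinates `{1,…,N}` (coordinate `i` is represented by `i - 1 : Fin N`). -/
def charVec (N : ℕ) (s : Finset ℕ) : Fin N → ZMod 2 :=
  fun i => if (i : ℕ) + 1 ∈ s then 1 else 0

lemma Bk_struct : ∀ (k : ℕ) (s : Finset ℕ), s ∈ Bk k →
    ∃ m j, 1 ≤ j ∧ j ≤ 2 ^ (m + 1) - 1 ∧ m + 2 ≤ k ∧ s = {j, 2 ^ (m + 1) + j} := by
  intro k
  induction k using Nat.strong_induction_on with
  | _ k ih =>
    match k with
    | 0 => simp [Bk]
    | 1 => simp [Bk]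
    | (k + 2) =>
      intro s hs
      rw [Bk] at hs
      rcases Finset.mem_union.1 hs with h | h
      · obtain ⟨m, j, h1, h2, h3, h4⟩ := ih (k + 1) (by omega) s h
        exact ⟨m, j, h1, h2, by omega, h4⟩
      · obtain ⟨j, hj, rfl⟩ := Finset.mem_image.1 h
        rw [Finset.mem_Icc] at hj
        exact ⟨k, j, hj.1, hj.2, le_rfl, rfl⟩

lemma pair_max {a b : ℕ} (h : a < b) (hne : ({a, b} : Finset ℕ).Nonempty) :
    ({a, b} : Finset ℕ).max' hne = b := by
  apply le_antisymm
  · apply Finset.max'_le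
    intro y hy
    simp at hy
    rcases hy with rfl | rfl <;> omega
  · exact Finset.le_max' _ _ (by simp)

lemma tri_li {ι : Type*} {n : ℕ} (v : ι → Fin n → ZMod 2) (p : ι → Fin n)
    (hp : Function.Injective p)
    (h1 : ∀ i, v i (p i) ≠ 0) (h0 : ∀ i j, p i < p j → v i (p j) = 0) :
    LinearIndependent (ZMod 2) v := by
  rw [linearIndependent_iff']
  intro t g hsum i hi
  by_contra hne
  classical
  set T := t.filter (fun i => g i ≠ 0) with hT
  have hTne : T.Nonempty := ⟨i, Finset.mem_filter.2 ⟨hi, hne⟩⟩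
  obtain ⟨j, hjT, hjmax⟩ := T.exists_max_image p hTne
  have hjt : j ∈ t := (Finset.mem_filter.1 hjT).1
  have hgj : g j ≠ 0 := (Finset.mem_filter.1 hjT).2
  have := congrFun hsum (p j)
  rw [Finset.sum_apply] at this
  have heq : ∑ x ∈ t, (g x • v x) (p j) = g j * v j (p j) := by
    rw [Finset.sum_eq_single j]
    · simp [smul_eq_mul]
    · intro b hb hbj
      by_cases hgb : g b = 0
      · simp [hgb]
      · have hbT : b ∈ T := Finset.mem_filter.2 ⟨hb, hgb⟩
        have : p b < p j := lt_of_le_of_ne (hjmax b hbT) (fun h => hbj (hp h))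
        simp [smul_eq_mul, h0 b j this]
    · intro h; exact absurd hjt h
  rw [heq] at this
  simp at this
  rcases this with h | h
  · exact hgj h
  · exact h1 j h

/-- The characteristic vectors of the 2-element sets in `B_k` are linearly independent
over `ZMod 2`. -/
theorem stmt_2 (k : ℕ) (hk : 1 ≤ k) :
    LinearIndependent (ZMod 2)
      (fun s : {x // x ∈ Bk k} => charVec (2 ^ k - 1) (s : Finset ℕ)) := by
  classical
  have hne : ∀ s : {x // x ∈ Bk k}, (s : Finset ℕ).Nonempty := by
    rintro ⟨s, hs⟩
    obtain ⟨m, j, h1, h2, h3, rfl⟩ := Bk_struct k s hs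
    exact ⟨j, by simp⟩
  have hbound : ∀ s : {x // x ∈ Bk k}, (s : Finset ℕ).max' (hne s) - 1 < 2 ^ k - 1 := by
    rintro ⟨s, hs⟩
    obtain ⟨m, j, h1, h2, h3, rfl⟩ := Bk_struct k s hs
    have hlt : j < 2 ^ (m + 1) + j := by omega
    rw [pair_max hlt]
    have hm : 2 ^ (m + 2) ≤ 2 ^ k := Nat.pow_le_pow_right (by norm_num) h3
    have : 2 ^ (m + 2) = 2 * 2 ^ (m + 1) := by ring
    have h1m : 1 ≤ 2 ^ (m + 1) := Nat.one_le_two_pow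
    omega
  set p : {x // x ∈ Bk k} → Fin (2 ^ k - 1) :=
    fun s => ⟨(s : Finset ℕ).max' (hne s) - 1, hbound s⟩ with hp
  have hmax1 : ∀ s : {x // x ∈ Bk k}, 1 ≤ (s : Finset ℕ).max' (hne s) := by
    rintro ⟨s, hs⟩
    obtain ⟨m, j, h1, h2, h3, rfl⟩ := Bk_struct k s hs
    rw [pair_max (show j < 2 ^ (m + 1) + j by omega)]
    omega
  apply tri_li _ p
  · rintro ⟨s, hs⟩ ⟨t, ht⟩ heq
    obtain ⟨m, j, h1, h2, h3, rfl⟩ := Bk_struct k s hs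
    obtain ⟨m', j', h1', h2', h3', rfl⟩ := Bk_struct k t ht
    simp only [hp, Fin.mk.injEq] at heq
    rw [pair_max (show j < 2 ^ (m + 1) + j by omega),
        pair_max (show j' < 2 ^ (m' + 1) + j' by omega)] at heq
    have heq' : 2 ^ (m + 1) + j = 2 ^ (m' + 1) + j' := by omega
    have hmm : m = m' := by
      rcases lt_trichotomy m m' with h | h | h
      · have : 2 ^ (m + 2) ≤ 2 ^ (m' + 1) := Nat.pow_le_pow_right (by norm_num) (by omega)
        have h2p : 2 ^ (m + 2) = 2 * 2 ^ (m + 1) := by ring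
        omega
      · exact h
      · have : 2 ^ (m' + 2) ≤ 2 ^ (m + 1) := Nat.pow_le_pow_right (by norm_num) (by omega)
        have h2p : 2 ^ (m' + 2) = 2 * 2 ^ (m' + 1) := by ring
        omega
    subst hmm
    have : j = j' := by omega
    subst this
    rfl
  · intro i
    have h1 := hmax1 i
    have : ((p i : ℕ)) + 1 = (i : Finset ℕ).max' (hne i) := by
      simp only [hp]; omega
    simp only [charVec, this]
    rw [if_pos (Finset.max'_mem _ _)]
    norm_num
  · intro i j hij
    have h1i := hmax1 i
    have h1j := hmax1 j
    have hlt : (i : Finset ℕ).max' (hne i) < (j : Finset ℕ).max' (hne j) := by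
      have := hij
      simp only [hp, Fin.mk_lt_mk] at this
      omega
    have : ((p j : ℕ)) + 1 = (j : Finset ℕ).max' (hne j) := by
      simp only [hp]; omega
    simp only [charVec, this]
    rw [if_neg]
    intro hmem
    exact absurd (Finset.le_max' _ _ hmem) (by omega)
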